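/- For 0 < g < 1, define θ2(g) = g^{1/4} ∏_{n≥1} (1-g^{2n})(1+g^{2n})(1+g^{2n-2}), θ3(g) = ∏_{n≥1} (1-g^{2n})(1+g^{2n-1})^2, and θ4(g) = ∏_{n≥1} (1-g^{2n})(1-g^{2n-1})^2. Then θ2(g)·θ4(g)/θ3(g)^2 = 2·(g^{1/24} ∏_{n≥1} (1+(-g)^n))^6. -/

import Mathlib

open Real

lemma pow_le_self_aux {g : ℝ} (hg0 : 0 < g) (hg1 : g < 1) {k : ℕ} (hk : 1 ≤ k) :
    g ^ k ≤ g := by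
  simpa using pow_le_pow_of_le_one hg0.le hg1.le hk

/-- Key convergence lemma: a product whose factors are within `g^n` of 1
and bounded below by `1 - g` is multipliable with positive value. -/
lemma key_prod {g : ℝ} (hg0 : 0 < g) (hg1 : g < 1) (f : ℕ → ℝ)
    (hb : ∀ n, |f n - 1| ≤ g ^ n) (hlow : ∀ n, 1 - g ≤ f n) :
    Multipliable f ∧ 0 < ∏' n, f n := by
  have hpos : ∀ n, 0 < f n := fun n => lt_of_lt_of_le (by linarith) (hlow n)
  -- summability of the logs
  have hlog : ∀ n, |Real.log (f n)| ≤ g ^ n / (1 - g) := by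
    intro n
    have hgn : (0 : ℝ) ≤ g ^ n := pow_nonneg hg0.le n
    rcases le_or_gt 1 (f n) with h | h
    · rw [abs_of_nonneg (Real.log_nonneg h)]
      have h1 : Real.log (f n) ≤ f n - 1 := by
        have := Real.log_le_sub_one_of_pos (hpos n)
        linarith
      have h2 : f n - 1 ≤ g ^ n := (abs_le.mp (hb n)).2
      have h3 : g ^ n ≤ g ^ n / (1 - g) := by
        rw [le_div_iff₀ (by linarith)]
        nlinarith
      linarith
    · rw [abs_of_nonpos (Real.log_nonpos (hpos n).le h.le)]
      have h1 : Real.log (f n)⁻¹ ≤ (f n)⁻¹ - 1 := by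
        have := Real.log_le_sub_one_of_pos (inv_pos.mpr (hpos n))
        linarith
      rw [Real.log_inv] at h1
      have h2 : (f n)⁻¹ - 1 = (1 - f n) / f n := by
        rw [sub_div, div_self (hpos n).ne', one_div]
      have h3 : (1 - f n) / f n ≤ g ^ n / (1 - g) := by
        apply div_le_div₀ (by positivity) _ (by linarith) (hlow n)
        have := (abs_le.mp (hb n)).1
        linarith
      linarith
  have hsum : Summable fun n => Real.log (f n) := by
    apply Summable.of_abs
    apply Summable.of_nonneg_of_le (fun n => abs_nonneg _) hlog
    exact (summable_geometric_of_lt_one hg0.le hg1).div_const _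
  have h1 : HasProd f (Real.exp (∑' n, Real.log (f n))) := by
    have h := hsum.hasSum.rexp
    have heq : (Real.exp ∘ fun n => Real.log (f n)) = f :=
      funext fun n => Real.exp_log (hpos n)
    rwa [heq] at h
  exact ⟨h1.multipliable, h1.tprod_eq ▸ Real.exp_pos _⟩

lemma hb_aux {g : ℝ} (hg0 : 0 < g) (hg1 : g < 1) {k n : ℕ} (hk : n ≤ k) (ε : ℝ)
    (hε : |ε| = 1) : |(1 + ε * g ^ k) - 1| ≤ g ^ n := by
  have : |(1 + ε * g ^ k) - 1| = g ^ k := by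
    rw [show (1 + ε * g ^ k) - 1 = ε * g ^ k by ring, abs_mul, hε, one_mul,
      abs_of_nonneg (pow_nonneg hg0.le k)]
  rw [this]
  exact pow_le_pow_of_le_one hg0.le hg1.le hk

lemma low_aux {g : ℝ} (hg0 : 0 < g) (hg1 : g < 1) {k : ℕ} (hk : 1 ≤ k) (ε : ℝ)
    (hε : |ε| = 1) : 1 - g ≤ 1 + ε * g ^ k := by
  have h1 : -(g ^ k) ≤ ε * g ^ k := by
    have : |ε * g ^ k| = g ^ k := by
      rw [abs_mul, hε, one_mul, abs_of_nonneg (pow_nonneg hg0.le k)]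
    linarith [(abs_le.mp this.le).1]
  have h2 : g ^ k ≤ g := pow_le_self_aux hg0 hg1 hk
  linarith

set_option maxHeartbeats 1000000 in
/-- With `θ2, θ3, θ4` given by their product representations in `g`
(for `0 < g < 1`), one has `θ2 g * θ4 g / (θ3 g)^2
= 2 * (g^(1/24) * ∏_{n≥1} (1 + (-g)^n))^6`. -/
theorem stmt_2 (g : ℝ) (hg0 : 0 < g) (hg1 : g < 1)
    (θ2 θ3 θ4 : ℝ → ℝ)
    (h2 : θ2 g = g ^ ((1 : ℝ) / 4) *
      ∏' n : ℕ, ((1 - g ^ (2 * n + 2)) * (1 + g ^ (2 * n + 2)) * (1 + g ^ (2 * n))))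
    (h3 : θ3 g = ∏' n : ℕ, ((1 - g ^ (2 * n + 2)) * (1 + g ^ (2 * n + 1)) ^ 2))
    (h4 : θ4 g = ∏' n : ℕ, ((1 - g ^ (2 * n + 2)) * (1 - g ^ (2 * n + 1)) ^ 2)) :
    θ2 g * θ4 g / (θ3 g) ^ 2 =
      2 * (g ^ ((1 : ℝ) / 24) * ∏' n : ℕ, (1 + (-g) ^ (n + 1))) ^ 6 := by
  -- the basic factor families
  set fA : ℕ → ℝ := fun n => 1 - g ^ (2 * n + 2) with hfA
  set fB : ℕ → ℝ := fun n => 1 + g ^ (2 * n + 2) with hfB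
  set fC : ℕ → ℝ := fun n => 1 + g ^ (2 * n) with hfC
  set fD : ℕ → ℝ := fun n => 1 + g ^ (2 * n + 1) with hfD
  set fE : ℕ → ℝ := fun n => 1 - g ^ (2 * n + 1) with hfE
  set fQ : ℕ → ℝ := fun n => 1 - g ^ (n + 1) with hfQ
  set fR : ℕ → ℝ := fun n => 1 + g ^ (n + 1) with hfR
  set fP : ℕ → ℝ := fun n => 1 + (-g) ^ (n + 1) with hfP
  have hbA : ∀ n, |fA n - 1| ≤ g ^ n := fun n => by
    simpa [hfA, sub_eq_add_neg, neg_one_mul] using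
      hb_aux hg0 hg1 (k := 2 * n + 2) (by omega) (-1) (by norm_num)
  have hbB : ∀ n, |fB n - 1| ≤ g ^ n := fun n => by
    simpa [hfB] using hb_aux hg0 hg1 (k := 2 * n + 2) (by omega) 1 (by norm_num)
  have hbC : ∀ n, |fC n - 1| ≤ g ^ n := fun n => by
    simpa [hfC] using hb_aux hg0 hg1 (k := 2 * n) (by omega) 1 (by norm_num)
  have hbD : ∀ n, |fD n - 1| ≤ g ^ n := fun n => by
    simpa [hfD] using hb_aux hg0 hg1 (k := 2 * n + 1) (by omega) 1 (by norm_num)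
  have hbE : ∀ n, |fE n - 1| ≤ g ^ n := fun n => by
    simpa [hfE, sub_eq_add_neg, neg_one_mul] using
      hb_aux hg0 hg1 (k := 2 * n + 1) (by omega) (-1) (by norm_num)
  have hbQ : ∀ n, |fQ n - 1| ≤ g ^ n := fun n => by
    simpa [hfQ, sub_eq_add_neg, neg_one_mul] using
      hb_aux hg0 hg1 (k := n + 1) (by omega) (-1) (by norm_num)
  have hbR : ∀ n, |fR n - 1| ≤ g ^ n := fun n => by
    simpa [hfR] using hb_aux hg0 hg1 (k := n + 1) (by omega) 1 (by norm_num)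
  have hbP : ∀ n, |fP n - 1| ≤ g ^ n := fun n => by
    have h : fP n - 1 = (-g) ^ (n + 1) := by simp [hfP]
    rw [h, abs_pow, abs_neg, abs_of_nonneg hg0.le]
    exact pow_le_pow_of_le_one hg0.le hg1.le (by omega)
  have hlA : ∀ n, 1 - g ≤ fA n := fun n => by
    simpa [hfA, sub_eq_add_neg, neg_one_mul] using
      low_aux hg0 hg1 (k := 2 * n + 2) (by omega) (-1) (by norm_num)
  have hlB : ∀ n, 1 - g ≤ fB n := fun n => by
    have : (0:ℝ) ≤ g ^ (2 * n + 2) := pow_nonneg hg0.le _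
    simp only [hfB]; linarith
  have hlC : ∀ n, 1 - g ≤ fC n := fun n => by
    have : (0:ℝ) ≤ g ^ (2 * n) := pow_nonneg hg0.le _
    simp only [hfC]; linarith
  have hlD : ∀ n, 1 - g ≤ fD n := fun n => by
    have : (0:ℝ) ≤ g ^ (2 * n + 1) := pow_nonneg hg0.le _
    simp only [hfD]; linarith
  have hlE : ∀ n, 1 - g ≤ fE n := fun n => by
    simpa [hfE, sub_eq_add_neg, neg_one_mul] using
      low_aux hg0 hg1 (k := 2 * n + 1) (by omega) (-1) (by norm_num)
  have hlQ : ∀ n, 1 - g ≤ fQ n := fun n => by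
    simpa [hfQ, sub_eq_add_neg, neg_one_mul] using
      low_aux hg0 hg1 (k := n + 1) (by omega) (-1) (by norm_num)
  have hlR : ∀ n, 1 - g ≤ fR n := fun n => by
    have : (0:ℝ) ≤ g ^ (n + 1) := pow_nonneg hg0.le _
    simp only [hfR]; linarith
  have hlP : ∀ n, 1 - g ≤ fP n := fun n => by
    have h1 : -(g ^ (n + 1)) ≤ (-g) ^ (n + 1) := by
      have : |(-g) ^ (n + 1)| = g ^ (n + 1) := by
        rw [abs_pow, abs_neg, abs_of_nonneg hg0.le]
      linarith [(abs_le.mp this.le).1]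
    have h2 : g ^ (n + 1) ≤ g := pow_le_self_aux hg0 hg1 (by omega)
    simp only [hfP]; linarith
  obtain ⟨mA, pA⟩ := key_prod hg0 hg1 fA hbA hlA
  obtain ⟨mB, pB⟩ := key_prod hg0 hg1 fB hbB hlB
  obtain ⟨mC, pC⟩ := key_prod hg0 hg1 fC hbC hlC
  obtain ⟨mD, pD⟩ := key_prod hg0 hg1 fD hbD hlD
  obtain ⟨mE, pE⟩ := key_prod hg0 hg1 fE hbE hlE
  obtain ⟨mQ, pQ⟩ := key_prod hg0 hg1 fQ hbQ hlQ
  obtain ⟨mR, pR⟩ := key_prod hg0 hg1 fR hbR hlR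
  obtain ⟨mP, pP⟩ := key_prod hg0 hg1 fP hbP hlP
  set A := ∏' n, fA n with hA
  set B := ∏' n, fB n with hB
  set D := ∏' n, fD n with hD
  set E := ∏' n, fE n with hE
  -- fC shifted is fB
  have hCshift : (fun n => fC (n + 1)) = fB := by
    funext n
    simp only [hfC, hfB]
    rw [show 2 * (n + 1) = 2 * n + 2 from by ring]
  have hC : ∏' n, fC n = 2 * B := by
    rw [tprod_eq_zero_mul' (by rw [hCshift]; exact mB), hCshift, ← hB]
    have h0 : fC 0 = 2 := by norm_num [hfC]
    rw [h0]
  -- even/odd splits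
  have hPe : (fun k => fP (2 * k)) = fE := by
    funext k
    simp only [hfP, hfE]
    rw [Odd.neg_pow ⟨k, by ring⟩]
    ring
  have hPo : (fun k => fP (2 * k + 1)) = fB := by
    funext k
    simp only [hfP, hfB]
    rw [Even.neg_pow ⟨k + 1, by ring⟩]
  have hP : ∏' n, fP n = E * B := by
    rw [← tprod_even_mul_odd (hPe ▸ mE) (hPo ▸ mB), hPe, hPo]
  have hQe : (fun k => fQ (2 * k)) = fE := by
    funext k; simp only [hfQ, hfE]
  have hQo : (fun k => fQ (2 * k + 1)) = fA := by
    funext k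
    simp only [hfQ, hfA]
  have hQ : ∏' n, fQ n = E * A := by
    rw [← tprod_even_mul_odd (hQe ▸ mE) (hQo ▸ mA), hQe, hQo]
  have hRe : (fun k => fR (2 * k)) = fD := by
    funext k; simp only [hfR, hfD]
  have hRo : (fun k => fR (2 * k + 1)) = fB := by
    funext k
    simp only [hfR, hfB]
  have hR : ∏' n, fR n = D * B := by
    rw [← tprod_even_mul_odd (hRe ▸ mD) (hRo ▸ mB), hRe, hRo]
  -- Euler: (1+x)(1-x) = 1-x², giving R * Q = A
  have hRQ : (fun n => fR n * fQ n) = fA := by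
    funext n
    simp only [hfR, hfQ, hfA]
    have h : g ^ (2 * n + 2) = g ^ (n + 1) * g ^ (n + 1) := by
      rw [← pow_add]; congr 1; ring
    rw [h]; ring
  have hBDE : B * D * E = 1 := by
    have h1 : (∏' n, fR n) * ∏' n, fQ n = A := by
      rw [← Multipliable.tprod_mul mR mQ, hRQ]
    rw [hR, hQ] at h1
    have h2 : A * (B * D * E) = A * 1 := by rw [mul_one]; nlinarith [h1]
    exact mul_left_cancel₀ (ne_of_gt pA) h2
  -- compute the three theta products
  have hθ2 : (∏' n : ℕ, ((1 - g ^ (2 * n + 2)) * (1 + g ^ (2 * n + 2)) * (1 + g ^ (2 * n))))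
      = A * B * (2 * B) := by
    have h : (fun n : ℕ => (1 - g ^ (2 * n + 2)) * (1 + g ^ (2 * n + 2)) * (1 + g ^ (2 * n)))
        = fun n => (fA n * fB n) * fC n := rfl
    rw [h, Multipliable.tprod_mul (mA.mul mB) mC, Multipliable.tprod_mul mA mB, hC]
  have hθ3 : (∏' n : ℕ, ((1 - g ^ (2 * n + 2)) * (1 + g ^ (2 * n + 1)) ^ 2))
      = A * (D * D) := by
    have h : (fun n : ℕ => (1 - g ^ (2 * n + 2)) * (1 + g ^ (2 * n + 1)) ^ 2)
        = fun n => fA n * (fD n * fD n) := by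
      funext n; rw [sq]
    rw [h, Multipliable.tprod_mul mA (mD.mul mD), Multipliable.tprod_mul mD mD]
  have hθ4 : (∏' n : ℕ, ((1 - g ^ (2 * n + 2)) * (1 - g ^ (2 * n + 1)) ^ 2))
      = A * (E * E) := by
    have h : (fun n : ℕ => (1 - g ^ (2 * n + 2)) * (1 - g ^ (2 * n + 1)) ^ 2)
        = fun n => fA n * (fE n * fE n) := by
      funext n; rw [sq]
    rw [h, Multipliable.tprod_mul mA (mE.mul mE), Multipliable.tprod_mul mE mE]
  -- the rpow bookkeeping
  have hrpow : (g ^ ((1 : ℝ) / 24)) ^ (6 : ℕ) = g ^ ((1 : ℝ) / 4) := by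
    rw [← Real.rpow_natCast (g ^ ((1 : ℝ) / 24)) 6, ← Real.rpow_mul hg0.le]
    norm_num
  -- put everything together
  rw [h2, h3, h4, hθ2, hθ3, hθ4, hP,
    mul_pow (g ^ ((1 : ℝ) / 24)) (E * B) 6, hrpow]
  have hne : ((A * (D * D)) ^ 2 : ℝ) ≠ 0 := by positivity
  rw [div_eq_iff hne]
  linear_combination (-2 * g ^ ((1:ℝ)/4) * A ^ 2 * B ^ 2 * E ^ 2 *
    (B * D * E + 1) * ((B * D * E) ^ 2 + 1)) * hBDE
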